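/- Let u(x) = x^n + B·x + C ∈ ℤ[x] be a monic polynomial of degree n > 1 with B ≠ 0 and C ≠ 0. If u(x) has a multiple root (in an algebraic closure of ℚ), then n divides B and n−1 divides C. -/

import Mathlib

open Polynomial

noncomputable section

/-- Key Lemma (1): if the monic trinomial `u(x) = x^n + B·x + C ∈ ℤ[x]` (with `n > 1`,
`B ≠ 0`, `C ≠ 0`) has a multiple root in an algebraic closure of `ℚ`, then `n ∣ B` and
`(n-1) ∣ C`. -/
theorem trinomial_multiple_root_divisibility
    (n : ℕ) (hn : 1 < n) (B C : ℤ) (hB : B ≠ 0) (hC : C ≠ 0)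
    (hmult : ∃ x : AlgebraicClosure ℚ,
      2 ≤ ((X ^ n + Polynomial.C B * X + Polynomial.C C : ℤ[X]).map
            (algebraMap ℤ (AlgebraicClosure ℚ))).rootMultiplicity x) :
    (n : ℤ) ∣ B ∧ ((n : ℤ) - 1) ∣ C := by
  obtain ⟨x, hx⟩ := hmult
  let K := AlgebraicClosure ℚ
  set u : ℤ[X] := X ^ n + Polynomial.C B * X + Polynomial.C C with hu
  have hu_monic : u.Monic := by
    rw [hu, add_assoc]
    exact monic_X_pow_add (degree_linear_le.trans_lt (by exact_mod_cast hn))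
  have hp0 : u.map (algebraMap ℤ K) ≠ 0 := (hu_monic.map _).ne_zero
  obtain ⟨h1, h2⟩ := (one_lt_rootMultiplicity_iff_isRoot hp0).mp hx
  have e1 : x ^ n + (B : K) * x + (C : K) = 0 := by
    have h := h1
    rw [IsRoot.def, ← eval₂_eq_eval_map, ← aeval_def] at h
    simpa only [hu, map_add, map_pow, map_mul, aeval_X, aeval_C, map_intCast, map_natCast,
      algebraMap_int_eq, eq_intCast] using h
  have hd : derivative u = Polynomial.C (n : ℤ) * X ^ (n - 1) + Polynomial.C B := by
    rw [hu]
    simp [derivative_X_pow]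
  have e2 : (n : K) * x ^ (n - 1) + (B : K) = 0 := by
    have h := h2
    rw [IsRoot.def, derivative_map, hd, ← eval₂_eq_eval_map, ← aeval_def] at h
    simpa only [map_add, map_pow, map_mul, aeval_X, aeval_C, map_intCast, map_natCast,
      algebraMap_int_eq, eq_intCast, Int.cast_natCast] using h
  have hpow : x ^ n = x ^ (n - 1) * x := by rw [← pow_succ]; congr 1; omega
  rw [hpow] at e1
  have hx_eq : ((n : K) - 1) * (B : K) * x = -(n : K) * (C : K) := by
    linear_combination (n : K) * e1 - x * e2
  set q : ℚ := (-(n : ℚ) * C) / (((n : ℚ) - 1) * B) with hq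
  have hden0 : ((n : ℚ) - 1) * (B : ℚ) ≠ 0 :=
    mul_ne_zero (sub_ne_zero.mpr (by exact_mod_cast hn.ne')) (Int.cast_ne_zero.mpr hB)
  have hden' : algebraMap ℚ K (((n : ℚ) - 1) * B) ≠ 0 :=
    (map_ne_zero_iff _ (algebraMap ℚ K).injective).mpr hden0
  have hxq : x = algebraMap ℚ K q := by
    rw [hq, map_div₀, eq_div_iff hden']
    simp only [map_mul, map_sub, map_neg, map_natCast, map_one, map_intCast]
    linear_combination hx_eq
  have hxint : IsIntegral ℤ x :=
    ⟨u, hu_monic, by rw [eval₂_eq_eval_map]; exact h1⟩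
  rw [hxq] at hxint
  have hqint : IsIntegral ℤ q :=
    (isIntegral_algebraMap_iff ((algebraMap ℚ K).injective)).mp hxint
  obtain ⟨m, hm⟩ := IsIntegrallyClosed.isIntegral_iff.mp hqint
  have hxm : x = (m : K) := by
    rw [hxq, ← hm, ← IsScalarTower.algebraMap_apply]
    exact eq_intCast _ _
  rw [hxm] at e1 e2
  have E2 : (n : ℤ) * m ^ (n - 1) + B = 0 := by
    have h : (((n : ℤ) * m ^ (n - 1) + B : ℤ) : AlgebraicClosure ℚ) = 0 := by
      push_cast; exact e2
    exact_mod_cast h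
  have E1 : m ^ (n - 1) * m + B * m + C = 0 := by
    have h : ((m ^ (n - 1) * m + B * m + C : ℤ) : AlgebraicClosure ℚ) = 0 := by
      push_cast; linear_combination e1
    exact_mod_cast h
  exact ⟨⟨-m ^ (n - 1), by linear_combination E2⟩,
    ⟨m ^ (n - 1) * m, by linear_combination E1 - m * E2⟩⟩
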